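/- Let (𝔤, ω) be a symplectic Lie algebra and consider the left symmetric product on 𝒟 := 𝔤 × 𝔤* given by (x,α)(y,β) := (xy + ad*_α y, αβ + ad*_x β). Then the trace of the right multiplication R_u : v ↦ vu on 𝒟 vanishes for every u ∈ 𝒟 if and only if 𝔤 is unimodular, i.e. tr(ad_x) = 0 for all x ∈ 𝔤. -/

import Mathlib

/-- The coadjoint action of `x : L` on the dual: `⟨coad x α, y⟩ = -⟨α, [x,y]⟩`. -/
noncomputable def coad {L : Type*} [LieRing L] [LieAlgebra ℝ L]
    (x : L) (α : Module.Dual ℝ L) : Module.Dual ℝ L :=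
  -(α ∘ₗ (LieAlgebra.ad ℝ L x))

/-- The product `(x,α)(y,β) = (xy + ad*_α y, αβ + ad*_x β)` on `𝒟 = 𝔤 × 𝔤*`. -/
noncomputable def dprod {L : Type*} [LieRing L] [LieAlgebra ℝ L]
    (p : L →ₗ[ℝ] L →ₗ[ℝ] L) (r : Module.Dual ℝ L →ₗ[ℝ] L)
    (cstar : Module.Dual ℝ L → L → L)
    (u v : L × Module.Dual ℝ L) : L × Module.Dual ℝ L :=
  (p u.1 v.1 + cstar u.2 v.1, coad (r u.2) v.2 + coad u.1 v.2)

namespace Stmt15Aux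

variable {L : Type*} [LieRing L] [LieAlgebra ℝ L]

/-- `y ↦ coad y α` as a linear map. -/
noncomputable def Gmap (α : Module.Dual ℝ L) : L →ₗ[ℝ] Module.Dual ℝ L :=
  -((LinearMap.llcomp ℝ L L ℝ α) ∘ₗ (LieAlgebra.ad ℝ L : L →ₗ[ℝ] Module.End ℝ L))

@[simp] lemma Gmap_apply (α : Module.Dual ℝ L) (y : L) :
    Gmap α y = coad y α := by
  rfl

@[simp] lemma coad_apply (x : L) (α : Module.Dual ℝ L) (z : L) :
    coad x α z = -(α ⁅x, z⁆) := by
  simp [coad]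

section

variable [FiniteDimensional ℝ L]
variable (ω : L →ₗ[ℝ] Module.Dual ℝ L)
    (hskew : ∀ x y : L, ω x y = - ω y x)
    (hclosed : ∀ x y z : L, ω ⁅x, y⁆ z + ω ⁅y, z⁆ x + ω ⁅z, x⁆ y = 0)
    (r : Module.Dual ℝ L →ₗ[ℝ] L)
    (hr1 : ∀ α : Module.Dual ℝ L, ω (r α) = α)
    (hr2 : ∀ x : L, r (ω x) = x)

omit [FiniteDimensional ℝ L] in
include hr2 in
lemma hinj : Function.Injective ω := by
  intro u v huv
  have := congrArg r huv
  simpa [hr2] using this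

include hskew hclosed hr1 hr2 in
/-- The key structural identity: `r ∘ Gmap α = -(ad (r α)) - r ∘ (ad (r α))* ∘ ω`. -/
lemma key (α : Module.Dual ℝ L) :
    r ∘ₗ Gmap α = -(LieAlgebra.ad ℝ L (r α))
      - r ∘ₗ ((LieAlgebra.ad ℝ L (r α)).dualMap ∘ₗ ω) := by
  set a := r α with ha
  ext y
  apply hinj ω r hr2
  rw [LinearMap.comp_apply, hr1]
  rw [LinearMap.sub_apply, LinearMap.neg_apply, map_sub, map_neg,
    LinearMap.comp_apply, hr1, LinearMap.comp_apply]
  ext z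
  have hc := hclosed a y z
  have f1 : ω a ⁅y, z⁆ = -(ω ⁅y, z⁆ a) := hskew _ _
  have f2 : ω y ⁅a, z⁆ = -(ω ⁅a, z⁆ y) := hskew _ _
  have f3 : ω ⁅z, a⁆ y = -(ω ⁅a, z⁆ y) := by
    rw [← lie_skew z a, map_neg, LinearMap.neg_apply]
  have hαa : α ⁅y, z⁆ = ω a ⁅y, z⁆ := by rw [ha, hr1]
  simp only [Gmap_apply, coad_apply, LinearMap.sub_apply, LinearMap.neg_apply,
    LinearMap.dualMap_apply', LieAlgebra.ad_apply, LinearMap.comp_apply]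
  rw [hαa]
  linarith

include hskew hclosed hr1 hr2 in
/-- Trace of `r ∘ Gmap α` equals `-2 tr(ad (r α))`. -/
lemma trace_rG (α : Module.Dual ℝ L) :
    LinearMap.trace ℝ L (r ∘ₗ Gmap α)
      = -2 * LinearMap.trace ℝ L (LieAlgebra.ad ℝ L (r α)) := by
  rw [key ω hskew hclosed r hr1 hr2 α]
  have hωr : ω ∘ₗ r = LinearMap.id := by
    ext β; simp [hr1]
  have ht2 : LinearMap.trace ℝ L (r ∘ₗ ((LieAlgebra.ad ℝ L (r α)).dualMap ∘ₗ ω))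
      = LinearMap.trace ℝ L (LieAlgebra.ad ℝ L (r α)) := by
    rw [LinearMap.trace_comp_comm' ((LieAlgebra.ad ℝ L (r α)).dualMap ∘ₗ ω) r,
      LinearMap.comp_assoc, hωr, LinearMap.comp_id,
      LinearMap.dualMap_def, LinearMap.trace_transpose']
  rw [map_sub, map_neg, ht2]
  ring

end

end Stmt15Aux

open Stmt15Aux in
/-- for the left symmetric product on `𝒟 = 𝔤 × 𝔤*` of a symplectic Lie
algebra, all right multiplications `R_u : v ↦ vu` have zero trace iff `𝔤` is
unimodular. -/
theorem stmt15 {L : Type*} [LieRing L] [LieAlgebra ℝ L] [FiniteDimensional ℝ L]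
    (ω : L →ₗ[ℝ] Module.Dual ℝ L)
    (hskew : ∀ x y : L, ω x y = - ω y x)
    (hclosed : ∀ x y z : L, ω ⁅x, y⁆ z + ω ⁅y, z⁆ x + ω ⁅z, x⁆ y = 0)
    (r : Module.Dual ℝ L →ₗ[ℝ] L)
    (hr1 : ∀ α : Module.Dual ℝ L, ω (r α) = α)
    (hr2 : ∀ x : L, r (ω x) = x)
    (p : L →ₗ[ℝ] L →ₗ[ℝ] L)
    (hp : ∀ x y z : L, ω (p x y) z = -(ω y ⁅x, z⁆))
    (cstar : Module.Dual ℝ L → L → L)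
    (hcstar : ∀ (α : Module.Dual ℝ L) (x : L) (β : Module.Dual ℝ L),
      β (cstar α x) = -((ω ⁅r α, r β⁆) x))
    (Rf : L × Module.Dual ℝ L → ((L × Module.Dual ℝ L) →ₗ[ℝ] (L × Module.Dual ℝ L)))
    (hRf : ∀ u v : L × Module.Dual ℝ L, Rf u v = dprod p r cstar v u) :
    (∀ u : L × Module.Dual ℝ L, LinearMap.trace ℝ (L × Module.Dual ℝ L) (Rf u) = 0) ↔
    (∀ x : L, LinearMap.trace ℝ L (LieAlgebra.ad ℝ L x) = 0) := by
  classical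
  have hcstar0 : ∀ x : L, cstar 0 x = 0 := by
    intro x
    rw [← Module.forall_dual_apply_eq_zero_iff ℝ (cstar 0 x)]
    intro β
    simp [hcstar 0 x β]
  have htrace : ∀ (x : L) (α : Module.Dual ℝ L),
      LinearMap.trace ℝ (L × Module.Dual ℝ L) (Rf (x, α))
        = -2 * LinearMap.trace ℝ L (LieAlgebra.ad ℝ L x)
          + -2 * LinearMap.trace ℝ L (LieAlgebra.ad ℝ L (r α)) := by
    intro x α
    set f := Rf (x, α) with hf
    set A : L →ₗ[ℝ] L := LinearMap.fst ℝ L _ ∘ₗ f ∘ₗ LinearMap.inl ℝ L _ with hA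
    set B : Module.Dual ℝ L →ₗ[ℝ] L :=
      LinearMap.fst ℝ L _ ∘ₗ f ∘ₗ LinearMap.inr ℝ L _ with hB
    set C : L →ₗ[ℝ] Module.Dual ℝ L :=
      LinearMap.snd ℝ L _ ∘ₗ f ∘ₗ LinearMap.inl ℝ L _ with hC
    set Dm : Module.Dual ℝ L →ₗ[ℝ] Module.Dual ℝ L :=
      LinearMap.snd ℝ L _ ∘ₗ f ∘ₗ LinearMap.inr ℝ L _ with hDm
    have hdecomp : f =
        (LinearMap.inl ℝ L (Module.Dual ℝ L) ∘ₗ A ∘ₗ LinearMap.fst ℝ L _)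
        + (LinearMap.inl ℝ L (Module.Dual ℝ L) ∘ₗ B ∘ₗ LinearMap.snd ℝ L _)
        + (LinearMap.inr ℝ L (Module.Dual ℝ L) ∘ₗ C ∘ₗ LinearMap.fst ℝ L _)
        + (LinearMap.inr ℝ L (Module.Dual ℝ L) ∘ₗ Dm ∘ₗ LinearMap.snd ℝ L _) := by
      apply LinearMap.ext
      intro v
      have hv : v = (v.1, (0 : Module.Dual ℝ L)) + ((0 : L), v.2) := by
        ext <;> simp
      have hfv : f v = f (v.1, 0) + f (0, v.2) := by
        rw [← map_add]; rw [← hv]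
      simp only [LinearMap.add_apply, LinearMap.comp_apply, LinearMap.fst_apply,
        LinearMap.snd_apply, LinearMap.inl_apply, LinearMap.inr_apply, hA, hB, hC, hDm]
      rw [hfv]
      ext <;> simp [Prod.add_def]
    have htrf : LinearMap.trace ℝ (L × Module.Dual ℝ L) f
        = LinearMap.trace ℝ L A + LinearMap.trace ℝ (Module.Dual ℝ L) Dm := by
      rw [hdecomp, map_add, map_add, map_add]
      have t1 : LinearMap.trace ℝ (L × Module.Dual ℝ L)
          (LinearMap.inl ℝ L (Module.Dual ℝ L) ∘ₗ A ∘ₗ LinearMap.fst ℝ L _)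
          = LinearMap.trace ℝ L A := by
        rw [LinearMap.trace_comp_comm' (A ∘ₗ LinearMap.fst ℝ L _)
          (LinearMap.inl ℝ L (Module.Dual ℝ L)), LinearMap.comp_assoc]
        simp
      have t2 : LinearMap.trace ℝ (L × Module.Dual ℝ L)
          (LinearMap.inl ℝ L (Module.Dual ℝ L) ∘ₗ B ∘ₗ LinearMap.snd ℝ L _)
          = 0 := by
        rw [LinearMap.trace_comp_comm' (B ∘ₗ LinearMap.snd ℝ L _)
          (LinearMap.inl ℝ L (Module.Dual ℝ L)), LinearMap.comp_assoc]
        have : (LinearMap.snd ℝ L (Module.Dual ℝ L)) ∘ₗ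
            (LinearMap.inl ℝ L (Module.Dual ℝ L)) = 0 := by ext v; simp
        rw [this]
        simp
      have t3 : LinearMap.trace ℝ (L × Module.Dual ℝ L)
          (LinearMap.inr ℝ L (Module.Dual ℝ L) ∘ₗ C ∘ₗ LinearMap.fst ℝ L _)
          = 0 := by
        rw [LinearMap.trace_comp_comm' (C ∘ₗ LinearMap.fst ℝ L _)
          (LinearMap.inr ℝ L (Module.Dual ℝ L)), LinearMap.comp_assoc]
        have : (LinearMap.fst ℝ L (Module.Dual ℝ L)) ∘ₗ
            (LinearMap.inr ℝ L (Module.Dual ℝ L)) = 0 := by ext v; simp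
        rw [this]
        simp
      have t4 : LinearMap.trace ℝ (L × Module.Dual ℝ L)
          (LinearMap.inr ℝ L (Module.Dual ℝ L) ∘ₗ Dm ∘ₗ LinearMap.snd ℝ L _)
          = LinearMap.trace ℝ (Module.Dual ℝ L) Dm := by
        rw [LinearMap.trace_comp_comm' (Dm ∘ₗ LinearMap.snd ℝ L _)
          (LinearMap.inr ℝ L (Module.Dual ℝ L)), LinearMap.comp_assoc]
        simp
      rw [t1, t2, t3, t4]
      ring
    -- identify A with r ∘ Gmap (ω x)
    have hAval : A = r ∘ₗ Gmap (ω x) := by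
      apply LinearMap.ext
      intro y
      have hl : A y = p y x := by
        have : A y = p y x + cstar 0 x := by
          simp only [hA, LinearMap.comp_apply, LinearMap.inl_apply, LinearMap.fst_apply,
            hf, hRf, dprod]
        rw [this, hcstar0, add_zero]
      apply hinj ω r hr2
      rw [hl, LinearMap.comp_apply, hr1]
      ext z
      simp only [Gmap_apply, coad_apply]
      rw [hp]
    -- identify Dm with Gmap α ∘ r
    have hDval : Dm = Gmap α ∘ₗ r := by
      apply LinearMap.ext
      intro β
      have : Dm β = coad (r β) α + coad 0 α := by
        simp only [hDm, LinearMap.comp_apply, LinearMap.inr_apply, LinearMap.snd_apply,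
          hf, hRf, dprod]
      rw [this]
      have h0 : coad (0 : L) α = 0 := by
        ext z; simp [coad]
      rw [h0, add_zero, LinearMap.comp_apply, Gmap_apply]
    rw [htrf, hAval, hDval,
      LinearMap.trace_comp_comm' r (Gmap α),
      trace_rG ω hskew hclosed r hr1 hr2 (ω x),
      trace_rG ω hskew hclosed r hr1 hr2 α, hr2]
  constructor
  · intro h x
    have hx := h (x, 0)
    rw [htrace x 0] at hx
    simp only [map_zero] at hx
    have h0 : LinearMap.trace ℝ L (LieAlgebra.ad ℝ L (0 : L)) = 0 := by simp
    linarith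
  · intro h u
    have := htrace u.1 u.2
    rw [Prod.mk.eta] at this
    rw [this, h u.1, h (r u.2)]
    ring
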